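/- Let N be a unital quantum channel on A and {Π_i} a finite family of mutually orthogonal projectors on A with ∑_i Π_i = 1_A (a partition of unity) such that N†(N(Π_i)) = Π_i for every i, where N† is the adjoint of N with respect to the Hilbert–Schmidt inner product. Then there exist a unitary U on A and a unital quantum channel M on A such that N = Ad_U ∘ M and M(Π_i) = Π_i for every i. -/

import Mathlib

open scoped Matrix Kronecker ComplexOrder Classical

noncomputable section

/-- A density matrix: positive semidefinite with unit trace. -/
def IsDensity {X : Type*} [Fintype X] (ρ : Matrix X X ℂ) : Prop :=
  ρ.PosSemidef ∧ ρ.trace = 1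

/-- A pure state: a density matrix that is a rank-one projection. -/
def IsPureState {X : Type*} [Fintype X] (ρ : Matrix X X ℂ) : Prop :=
  IsDensity ρ ∧ ρ * ρ = ρ

/-- A unitary matrix. -/
def IsUnitaryMat {X : Type*} [Fintype X] [DecidableEq X] (U : Matrix X X ℂ) : Prop :=
  U * Uᴴ = 1 ∧ Uᴴ * U = 1

/-- An orthogonal projection. -/
def IsProjection {X : Type*} [Fintype X] (P : Matrix X X ℂ) : Prop :=
  P.IsHermitian ∧ P * P = P

/-- Partial trace over the first tensor factor. -/
def ptraceL {A B : Type*} [Fintype A] (M : Matrix (A × B) (A × B) ℂ) : Matrix B B ℂ :=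
  Matrix.of fun b b' => ∑ a, M (a, b) (a, b')

/-- Partial trace over the second tensor factor. -/
def ptraceR {A B : Type*} [Fintype B] (M : Matrix (A × B) (A × B) ℂ) : Matrix A A ℂ :=
  Matrix.of fun a a' => ∑ b, M (a, b) (a', b)

/-- Partial trace over the middle factor of `(R ⊗ A) ⊗ B`. -/
def ptraceMid {R A B : Type*} [Fintype A] (M : Matrix ((R × A) × B) ((R × A) × B) ℂ) :
    Matrix (R × B) (R × B) ℂ :=
  Matrix.of fun p q => ∑ a, M ((p.1, a), p.2) ((q.1, a), q.2)

/-- Partial trace over the first factor of `(R ⊗ A) ⊗ B`. -/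
def ptraceFst3 {R A B : Type*} [Fintype R] (M : Matrix ((R × A) × B) ((R × A) × B) ℂ) :
    Matrix (A × B) (A × B) ℂ :=
  Matrix.of fun p q => ∑ r, M ((r, p.1), p.2) ((r, q.1), q.2)

/-- `U` on `A ⊗ B` is compatible with `σ` on `B`:
`Tr_A[U (ρ ⊗ σ) U†] = σ` for every density matrix `ρ` on `A`. -/
def Compatible {A B : Type*} [Fintype A] [Fintype B] [DecidableEq A] [DecidableEq B]
    (U : Matrix (A × B) (A × B) ℂ) (σ : Matrix B B ℂ) : Prop :=
  ∀ ρ : Matrix A A ℂ, IsDensity ρ → ptraceL (U * (ρ ⊗ₖ σ) * Uᴴ) = σ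

/-- `1_R ⊗ U` acting on `(R ⊗ A) ⊗ B`. -/
def oneTensor {R A B : Type*} [DecidableEq R] (U : Matrix (A × B) (A × B) ℂ) :
    Matrix ((R × A) × B) ((R × A) × B) ℂ :=
  Matrix.of fun p q => (if p.1.1 = q.1.1 then (1 : ℂ) else 0) * U (p.1.2, p.2) (q.1.2, q.2)

/-- Partial transpose on the second tensor factor. -/
def ptransposeSnd {A B : Type*} (U : Matrix (A × B) (A × B) ℂ) : Matrix (A × B) (A × B) ℂ :=
  Matrix.of fun p q => U (p.1, q.2) (q.1, p.2)

/-- Eigenvalues of a matrix (junk value `0` when not Hermitian). -/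
def eigsOf {X : Type*} [Fintype X] [DecidableEq X] (ρ : Matrix X X ℂ) : X → ℝ :=
  if h : ρ.IsHermitian then h.eigenvalues else 0

/-- Von Neumann entropy (base-2). -/
def vN {X : Type*} [Fintype X] [DecidableEq X] (ρ : Matrix X X ℂ) : ℝ :=
  -∑ i, eigsOf ρ i * Real.logb 2 (eigsOf ρ i)

/-- Ky Fan partial sum: sum of the `k` largest values of `v` (with multiplicity). -/
def kySum {X : Type*} [Fintype X] (v : X → ℝ) (k : ℕ) : ℝ :=
  ⨆ s : {s : Finset X // s.card ≤ k}, ∑ i ∈ s.1, v i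

/-- `v` majorizes `w` (Ky Fan characterization, padding with zeros). -/
def Majorizes {X Y : Type*} [Fintype X] [Fintype Y] (v : X → ℝ) (w : Y → ℝ) : Prop :=
  ∀ k : ℕ, kySum w k ≤ kySum v k

/-- Rényi entropy of order `α ≥ 0` of a probability vector (base 2). -/
def renyi {X : Type*} [Fintype X] (v : X → ℝ) (α : ℝ) : ℝ :=
  if α = 0 then Real.logb 2 ((Finset.univ.filter (fun i => v i ≠ 0)).card : ℝ)
  else if α = 1 then -∑ i, v i * Real.logb 2 (v i)
  else (1 / (1 - α)) * Real.logb 2 (∑ i, v i ^ α)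

/-- A completely positive trace-preserving map, via a Kraus representation. -/
def IsCPTP {X Y : Type*} [Fintype X] [Fintype Y] [DecidableEq X]
    (N : Matrix X X ℂ →ₗ[ℂ] Matrix Y Y ℂ) : Prop :=
  ∃ (m : ℕ) (K : Fin m → Matrix Y X ℂ),
    (∀ M, N M = ∑ j, K j * M * (K j)ᴴ) ∧ (∑ j, (K j)ᴴ * K j = 1)

/-- `N ⊗ id_B` for a linear map `N` on the first tensor factor. -/
def extendFst {A A' B : Type*} (N : Matrix A A ℂ →ₗ[ℂ] Matrix A' A' ℂ)
    (M : Matrix (A × B) (A × B) ℂ) : Matrix (A' × B) (A' × B) ℂ :=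
  Matrix.of fun p q => N (Matrix.of fun a a' => M (a, p.2) (a', q.2)) p.1 q.1

/-- `id_R ⊗ L ⊗ id_B` for a linear map `L` on the middle factor. -/
def extendMid {R A B : Type*} (L : Matrix A A ℂ →ₗ[ℂ] Matrix A A ℂ)
    (M : Matrix ((R × A) × B) ((R × A) × B) ℂ) : Matrix ((R × A) × B) ((R × A) × B) ℂ :=
  Matrix.of fun p q =>
    L (Matrix.of fun a a' => M ((p.1.1, a), p.2) ((q.1.1, a'), q.2)) p.1.2 q.1.2

/-- `U0 ⊗ U1` acting on `(A0 ⊗ A1) ⊗ (B0 ⊗ B1)`, with `U0` on `A0,B0` and `U1` on `A1,B1`. -/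
def delocW {A0 B0 A1 B1 : Type*} (U0 : Matrix (A0 × B0) (A0 × B0) ℂ)
    (U1 : Matrix (A1 × B1) (A1 × B1) ℂ) :
    Matrix ((A0 × A1) × (B0 × B1)) ((A0 × A1) × (B0 × B1)) ℂ :=
  Matrix.of fun p q =>
    U0 (p.1.1, p.2.1) (q.1.1, q.2.1) * U1 (p.1.2, p.2.2) (q.1.2, q.2.2)

/-- The pair `(U0, U1)` is compatible with `σ` on `B0 ⊗ B1` as a delocalized catalyst. -/
def DelocCompatible {A0 B0 A1 B1 : Type*} [Fintype A0] [Fintype A1] [Fintype B0] [Fintype B1]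
    (U0 : Matrix (A0 × B0) (A0 × B0) ℂ) (U1 : Matrix (A1 × B1) (A1 × B1) ℂ)
    (σ : Matrix (B0 × B1) (B0 × B1) ℂ) : Prop :=
  ∀ ρ : Matrix (A0 × A1) (A0 × A1) ℂ, IsDensity ρ →
    ptraceL (delocW U0 U1 * (ρ ⊗ₖ σ) * (delocW U0 U1)ᴴ) = σ

/-- `ρ` on `A ⊗ B` is partially classical (PC) on the first factor. -/
def PCFirst {A B : Type*} [Fintype A] [Fintype B] [DecidableEq A] [DecidableEq B]
    (ρ : Matrix (A × B) (A × B) ℂ) : Prop :=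
  ∃ (n : ℕ) (P : Fin n → Matrix A A ℂ), 2 ≤ n ∧ (∀ i, P i ≠ 0) ∧
    (∀ i, IsProjection (P i)) ∧ (∀ i j, i ≠ j → P i * P j = 0) ∧ (∑ i, P i = 1) ∧
    ρ = ∑ i, (P i ⊗ₖ (1 : Matrix B B ℂ)) * ρ * (P i ⊗ₖ (1 : Matrix B B ℂ))

/-- `ρ` on `A ⊗ B` is partially classical (PC) on the second factor. -/
def PCSecond {A B : Type*} [Fintype A] [Fintype B] [DecidableEq A] [DecidableEq B]
    (ρ : Matrix (A × B) (A × B) ℂ) : Prop :=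
  ∃ (n : ℕ) (P : Fin n → Matrix B B ℂ), 2 ≤ n ∧ (∀ i, P i ≠ 0) ∧
    (∀ i, IsProjection (P i)) ∧ (∀ i j, i ≠ j → P i * P j = 0) ∧ (∑ i, P i = 1) ∧
    ρ = ∑ i, ((1 : Matrix A A ℂ) ⊗ₖ P i) * ρ * ((1 : Matrix A A ℂ) ⊗ₖ P i)

/-- `U_{A'B} ⊗ 1_A` acting on `A' ⊗ (A ⊗ B)` where `A'` is a copy of `A`. -/
def copyW {A B : Type*} [DecidableEq A] (U : Matrix (A × B) (A × B) ℂ) :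
    Matrix (A × (A × B)) (A × (A × B)) ℂ :=
  Matrix.of fun p q =>
    U (p.1, p.2.2) (q.1, q.2.2) * (if p.2.1 = q.2.1 then (1 : ℂ) else 0)

/-- `U` on `A ⊗ B` is compatible with the bipartite state `σ` on `B` up to local unitary. -/
def CompatOnSndUpToLU {A B : Type*} [Fintype A] [Fintype B] [DecidableEq A] [DecidableEq B]
    (U : Matrix (A × B) (A × B) ℂ) (σ : Matrix (A × B) (A × B) ℂ) : Prop :=
  ∃ V : Matrix B B ℂ, IsUnitaryMat V ∧
    ∀ ρ' : Matrix A A ℂ, IsDensity ρ' →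
      ptraceL (copyW U * (ρ' ⊗ₖ σ) * (copyW U)ᴴ)
        = ((1 : Matrix A A ℂ) ⊗ₖ V) * σ * ((1 : Matrix A A ℂ) ⊗ₖ V)ᴴ

/-- The maximally entangled state `φ⁺` on `B ⊗ B`. -/
def maxEnt (B : Type*) [Fintype B] [DecidableEq B] : Matrix (B × B) (B × B) ℂ :=
  Matrix.of fun p q =>
    (if p.1 = p.2 then (1 : ℂ) else 0) * (if q.1 = q.2 then (1 : ℂ) else 0) /
      (Fintype.card B : ℂ)

/-- Choi matrix of a linear map on `B`. -/
def choi {B : Type*} [Fintype B] [DecidableEq B]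
    (R : Matrix B B ℂ →ₗ[ℂ] Matrix B B ℂ) : Matrix (B × B) (B × B) ℂ :=
  extendFst R (maxEnt B)

/-- `U1 ⊗ U0ᵀ` acting on `(A ⊗ A') ⊗ (B ⊗ B')`, `U1` on `A,B`, `U0ᵀ` on `A',B'`. -/
def dynW {A B : Type*} (U0 U1 : Matrix (A × B) (A × B) ℂ) :
    Matrix ((A × A) × (B × B)) ((A × A) × (B × B)) ℂ :=
  Matrix.of fun p q =>
    U1 (p.1.1, p.2.1) (q.1.1, q.2.1) * U0ᵀ (p.1.2, p.2.2) (q.1.2, q.2.2)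

/-- Compatibility of the superunitary `(U0, U1)` with a Choi matrix `J`. -/
def ChoiCompat {A B : Type*} [Fintype A] [Fintype B]
    (U0 U1 : Matrix (A × B) (A × B) ℂ) (J : Matrix (B × B) (B × B) ℂ) : Prop :=
  ∀ ρ : Matrix (A × A) (A × A) ℂ, IsDensity ρ →
    ptraceL (dynW U0 U1 * (ρ ⊗ₖ J) * (dynW U0 U1)ᴴ) = J

/-- `Pr`, with type sets `I`, `II`, is the essential decomposition of the
first factor `A` for `ρ` on `A ⊗ B`. -/
def EssDecompFst {A B : Type*} [Fintype A] [Fintype B] [DecidableEq A] [DecidableEq B]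
    (ρ : Matrix (A × B) (A × B) ℂ) {n : ℕ} (Pr : Fin n → Matrix A A ℂ)
    (I II : Finset (Fin n)) : Prop :=
  (∀ i, IsProjection (Pr i)) ∧ (∀ i j, i ≠ j → Pr i * Pr j = 0) ∧ (∑ i, Pr i = 1) ∧
  (∀ i, Pr i ≠ 0) ∧ Disjoint I II ∧ I ∪ II = Finset.univ ∧
  (∀ i, Commute (Pr i ⊗ₖ (1 : Matrix B B ℂ)) ρ) ∧
  (∀ i ∈ I, ∀ P : Matrix A A ℂ, IsProjection P → P * Pr i = P → Pr i * P = P →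
      Commute (P ⊗ₖ (1 : Matrix B B ℂ))
        ((Pr i ⊗ₖ (1 : Matrix B B ℂ)) * ρ * (Pr i ⊗ₖ (1 : Matrix B B ℂ))) →
      P = 0 ∨ P = Pr i) ∧
  (∀ i ∈ II, ∃ (r : ℕ) (σi : Matrix B B ℂ), 0 < r ∧ (Pr i).trace = (r : ℂ) ∧
      IsDensity σi ∧
      (Pr i ⊗ₖ (1 : Matrix B B ℂ)) * ρ * (Pr i ⊗ₖ (1 : Matrix B B ℂ))
        = (((Pr i ⊗ₖ (1 : Matrix B B ℂ)) * ρ).trace / (r : ℂ)) • (Pr i ⊗ₖ σi)) ∧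
  (∀ P : Matrix A A ℂ, IsProjection P → (∃ i, ¬ Commute P (Pr i)) →
      ¬ Commute (P ⊗ₖ (1 : Matrix B B ℂ)) ρ)

/-- `Pr`, with type sets `I`, `II`, is the essential decomposition of the
second factor `B` for `ρ` on `A ⊗ B`. -/
def EssDecompSnd {A B : Type*} [Fintype A] [Fintype B] [DecidableEq A] [DecidableEq B]
    (ρ : Matrix (A × B) (A × B) ℂ) {n : ℕ} (Pr : Fin n → Matrix B B ℂ)
    (I II : Finset (Fin n)) : Prop :=
  (∀ i, IsProjection (Pr i)) ∧ (∀ i j, i ≠ j → Pr i * Pr j = 0) ∧ (∑ i, Pr i = 1) ∧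
  (∀ i, Pr i ≠ 0) ∧ Disjoint I II ∧ I ∪ II = Finset.univ ∧
  (∀ i, Commute ((1 : Matrix A A ℂ) ⊗ₖ Pr i) ρ) ∧
  (∀ i ∈ I, ∀ P : Matrix B B ℂ, IsProjection P → P * Pr i = P → Pr i * P = P →
      Commute ((1 : Matrix A A ℂ) ⊗ₖ P)
        (((1 : Matrix A A ℂ) ⊗ₖ Pr i) * ρ * ((1 : Matrix A A ℂ) ⊗ₖ Pr i)) →
      P = 0 ∨ P = Pr i) ∧
  (∀ i ∈ II, ∃ (r : ℕ) (σi : Matrix A A ℂ), 0 < r ∧ (Pr i).trace = (r : ℂ) ∧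
      IsDensity σi ∧
      ((1 : Matrix A A ℂ) ⊗ₖ Pr i) * ρ * ((1 : Matrix A A ℂ) ⊗ₖ Pr i)
        = ((((1 : Matrix A A ℂ) ⊗ₖ Pr i) * ρ).trace / (r : ℂ)) • (σi ⊗ₖ Pr i)) ∧
  (∀ P : Matrix B B ℂ, IsProjection P → (∃ i, ¬ Commute P (Pr i)) →
      ¬ Commute ((1 : Matrix A A ℂ) ⊗ₖ P) ρ)

/-- `(Tr_B ∘ L) ⊗ id_D` applied to an operator on `A ⊗ D`. -/
def trFstApply {A B D : Type*} [Fintype B] (L : Matrix A A ℂ →ₗ[ℂ] Matrix B B ℂ)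
    (M : Matrix (A × D) (A × D) ℂ) : Matrix D D ℂ :=
  Matrix.of fun d d' => (L (Matrix.of fun a a' => M (a, d) (a', d'))).trace

/-- The spectrum of the randomness-exhausting output `d(σ)`. -/
def reoVec {n : ℕ} (lam : Fin n → ℝ) (r : Fin n → ℕ) :
    (Σ i : Fin n, Fin (r i * r i)) → ℝ :=
  fun x => lam x.1 / (r x.1 : ℝ)

/-- The spectrum of the delocalized randomness-exhausting output. -/
def dreoVec {n0 n1 : ℕ} (p : Fin n0 → Fin n1 → ℝ) (t0 : Fin n0 → ℕ) (t1 : Fin n1 → ℕ) :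
    (Σ i : Fin n0, Σ j : Fin n1, Fin (t0 i) × Fin (t1 j)) → ℝ :=
  fun x => p x.1 x.2.1 / ((t0 x.1 : ℝ) * (t1 x.2.1 : ℝ))

end


section Helpers

open Matrix

set_option linter.unusedSectionVars false
set_option maxHeartbeats 1000000

variable {A : Type} [Fintype A] [DecidableEq A]

open scoped MatrixOrder Matrix.Norms.L2Operator in
attribute [local instance] Matrix.instCStarAlgebra in
lemma Matrix.posSemidef_iff_eq_transpose_mul_self {M : Matrix A A ℂ} :
    M.PosSemidef ↔ ∃ B : Matrix A A ℂ, M = Bᴴ * B := by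
  constructor
  · intro h
    obtain ⟨B, hB⟩ := CStarAlgebra.nonneg_iff_eq_star_mul_self.mp h.nonneg
    exact ⟨B, by simpa [sub_zero, Matrix.star_eq_conjTranspose] using hB⟩
  · rintro ⟨B, rfl⟩
    exact Matrix.posSemidef_conjTranspose_mul_self B

lemma psd_trace_nonneg {M : Matrix A A ℂ} (h : M.PosSemidef) : 0 ≤ M.trace := by
  obtain ⟨B, rfl⟩ := Matrix.posSemidef_iff_eq_transpose_mul_self.mp h
  rw [Matrix.trace]
  apply Finset.sum_nonneg
  intro j _
  rw [Matrix.diag_apply, Matrix.mul_apply]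
  apply Finset.sum_nonneg
  intro i _
  simpa [Matrix.conjTranspose_apply] using star_mul_self_nonneg (B i j)

lemma psd_trace_zero {M : Matrix A A ℂ} (h : M.PosSemidef) (ht : M.trace = 0) : M = 0 := by
  obtain ⟨B, rfl⟩ := Matrix.posSemidef_iff_eq_transpose_mul_self.mp h
  suffices hB : B = 0 by simp [hB]
  rw [Matrix.trace] at ht
  have hnn : ∀ j ∈ Finset.univ, 0 ≤ ((Bᴴ * B).diag j) := by
    intro j _
    rw [Matrix.diag_apply, Matrix.mul_apply]
    apply Finset.sum_nonneg
    intro i _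
    simpa [Matrix.conjTranspose_apply] using star_mul_self_nonneg (B i j)
  have hz := (Finset.sum_eq_zero_iff_of_nonneg hnn).mp ht
  ext i j
  have := hz j (Finset.mem_univ j)
  rw [Matrix.diag_apply, Matrix.mul_apply] at this
  have h2 : ∀ i ∈ Finset.univ, (0:ℂ) ≤ star (B i j) * B i j := fun i _ => star_mul_self_nonneg _
  have := (Finset.sum_eq_zero_iff_of_nonneg (by
    intro i _
    simpa [Matrix.conjTranspose_apply] using star_mul_self_nonneg (B i j))).mp this i (Finset.mem_univ i)
  simp only [Matrix.conjTranspose_apply] at this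
  have : star (B i j) * B i j = 0 := this
  rcases mul_eq_zero.mp this with h | h
  · simpa using congrArg star h
  · simpa using h

lemma unitary_conj_cancel {V X Y : Matrix A A ℂ} (h2 : Vᴴ * V = 1)
    (h : V * X * Vᴴ = V * Y * Vᴴ) : X = Y := by
  have e : ∀ Z : Matrix A A ℂ, Vᴴ * (V * Z * Vᴴ) * V = Z := by
    intro Z
    calc Vᴴ * (V * Z * Vᴴ) * V = (Vᴴ * V) * Z * (Vᴴ * V) := by
          simp only [Matrix.mul_assoc]
      _ = Z := by rw [h2, Matrix.one_mul, Matrix.mul_one]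
  calc X = Vᴴ * (V * X * Vᴴ) * V := (e X).symm
    _ = Vᴴ * (V * Y * Vᴴ) * V := by rw [h]
    _ = Y := e Y

lemma proj_spectral {P : Matrix A A ℂ} (hP : IsProjection P) :
    ∃ (V : Matrix A A ℂ) (d : A → ℂ),
      V * Vᴴ = 1 ∧ Vᴴ * V = 1 ∧ P = V * Matrix.diagonal d * Vᴴ ∧
      (∀ a, d a = 0 ∨ d a = 1) := by
  obtain ⟨hH, hidem⟩ := hP
  set V : Matrix A A ℂ := (hH.eigenvectorUnitary : Matrix A A ℂ) with hVdef
  have hV1 : V * Vᴴ = 1 := by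
    have := (Matrix.mem_unitaryGroup_iff).mp hH.eigenvectorUnitary.2
    simpa [Matrix.star_eq_conjTranspose] using this
  have hV2 : Vᴴ * V = 1 := by
    have := (Matrix.mem_unitaryGroup_iff').mp hH.eigenvectorUnitary.2
    simpa [Matrix.star_eq_conjTranspose] using this
  set d : A → ℂ := fun a => ((hH.eigenvalues a : ℝ) : ℂ) with hddef
  have hspec : P = V * Matrix.diagonal d * Vᴴ := by
    have := hH.spectral_theorem
    simpa [Matrix.star_eq_conjTranspose, Function.comp_def] using this
  refine ⟨V, d, hV1, hV2, hspec, ?_⟩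
  have key : V * (Matrix.diagonal d * Matrix.diagonal d) * Vᴴ = P := by
    conv_rhs => rw [← hidem, hspec]
    simp only [Matrix.mul_assoc]
    rw [← Matrix.mul_assoc Vᴴ V (Matrix.diagonal d * Vᴴ), hV2, Matrix.one_mul]
  have hDD : Matrix.diagonal d * Matrix.diagonal d = Matrix.diagonal d := by
    apply unitary_conj_cancel hV2
    rw [key]
    exact hspec
  rw [Matrix.diagonal_mul_diagonal] at hDD
  intro a
  have h := Matrix.ext_iff.mpr hDD a a
  simp only [Matrix.diagonal_apply_eq, Pi.mul_apply] at h
  rcases mul_eq_zero.mp (by linear_combination h : d a * (d a - 1) = 0) with h' | h'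
  · exact Or.inl h'
  · exact Or.inr (by linear_combination h')

lemma exists_partial_isometry {d e : A → ℂ} (hd : ∀ a, d a = 0 ∨ d a = 1)
    (he : ∀ a, e a = 0 ∨ e a = 1) (hsum : ∑ a, d a = ∑ a, e a) :
    ∃ R : Matrix A A ℂ, R * Rᴴ = Matrix.diagonal e ∧ Rᴴ * R = Matrix.diagonal d ∧
      R * Matrix.diagonal d = R ∧ Matrix.diagonal e * R = R := by
  classical
  set s : Finset A := Finset.univ.filter (fun a => d a = 1) with hs
  set t : Finset A := Finset.univ.filter (fun a => e a = 1) with ht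
  have hmems : ∀ a, a ∈ s ↔ d a = 1 := by intro a; simp [hs]
  have hmemt : ∀ a, a ∈ t ↔ e a = 1 := by intro a; simp [ht]
  have hds : ∀ a, d a = if a ∈ s then 1 else 0 := by
    intro a
    by_cases h : a ∈ s
    · rw [if_pos h]; exact (hmems a).mp h
    · rw [if_neg h]
      rcases hd a with h' | h'
      · exact h'
      · exact absurd ((hmems a).mpr h') h
  have hes : ∀ a, e a = if a ∈ t then 1 else 0 := by
    intro a
    by_cases h : a ∈ t
    · rw [if_pos h]; exact (hmemt a).mp h
    · rw [if_neg h]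
      rcases he a with h' | h'
      · exact h'
      · exact absurd ((hmemt a).mpr h') h
  have hcard : s.card = t.card := by
    have h1 : ∑ a, d a = (s.card : ℂ) := by
      rw [Finset.sum_congr rfl (fun a _ => hds a)]
      simp [Finset.sum_ite_mem]
    have h2 : ∑ a, e a = (t.card : ℂ) := by
      rw [Finset.sum_congr rfl (fun a _ => hes a)]
      simp [Finset.sum_ite_mem]
    have : (s.card : ℂ) = (t.card : ℂ) := h1 ▸ h2 ▸ hsum
    exact_mod_cast this
  set f : {x // x ∈ s} ≃ {x // x ∈ t} := Finset.equivOfCardEq hcard with hf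
  set R : Matrix A A ℂ := Matrix.of fun a b =>
    if hb : b ∈ s then (if (f ⟨b, hb⟩ : A) = a then 1 else 0) else 0 with hR
  have hRapp : ∀ a b, R a b = if hb : b ∈ s then (if (f ⟨b, hb⟩ : A) = a then 1 else 0) else 0 :=
    fun a b => rfl
  have hRmem : ∀ a b, a ∉ t → R a b = 0 := by
    intro a b hat
    rw [hRapp]
    by_cases hbs : b ∈ s
    · rw [dif_pos hbs, if_neg]
      intro hcon
      exact hat (hcon ▸ (f ⟨b, hbs⟩).2)
    · rw [dif_neg hbs]
  have hRs : ∀ a b, b ∉ s → R a b = 0 := by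
    intro a b hbs
    rw [hRapp, dif_neg hbs]
  refine ⟨R, ?_, ?_, ?_, ?_⟩
  · -- R * Rᴴ = diagonal e
    ext a a'
    rw [Matrix.mul_apply, Matrix.diagonal_apply]
    by_cases hat : a ∈ t
    · set b0 : A := (f.symm ⟨a, hat⟩ : A) with hb0
      have hb0s : b0 ∈ s := (f.symm ⟨a, hat⟩).2
      have hfb0 : (f ⟨b0, hb0s⟩ : A) = a := by
        have h' : (⟨b0, hb0s⟩ : {x // x ∈ s}) = f.symm ⟨a, hat⟩ := Subtype.ext rfl
        rw [h', Equiv.apply_symm_apply]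
      have hnotb0 : ∀ b (hbs : b ∈ s), b ≠ b0 → (f ⟨b, hbs⟩ : A) ≠ a := by
        intro b hbs hb hcon
        apply hb
        have h' : (⟨b, hbs⟩ : {x // x ∈ s}) = f.symm ⟨a, hat⟩ := by
          apply_fun f
          rw [Equiv.apply_symm_apply]
          exact Subtype.ext hcon
        simpa [hb0] using congrArg Subtype.val h'
      rw [Finset.sum_eq_single b0]
      · rw [Matrix.conjTranspose_apply, hRapp a b0, hRapp a' b0, dif_pos hb0s, dif_pos hb0s]
        simp only [hfb0]
        by_cases haa : a = a'
        · subst haa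
          simp [(hmemt a).mp hat]
        · simp [haa]
      · intro b _ hb
        rw [hRapp a b]
        by_cases hbs : b ∈ s
        · rw [dif_pos hbs, if_neg (hnotb0 b hbs hb), zero_mul]
        · rw [dif_neg hbs, zero_mul]
      · intro h; exact absurd (Finset.mem_univ b0) h
    · rw [Finset.sum_eq_zero, eq_comm, ite_eq_right_iff]
      · intro haa
        rw [hes a, if_neg hat]
      · intro b _
        rw [hRmem a b hat, zero_mul]
  · -- Rᴴ * R = diagonal d
    ext b b'
    rw [Matrix.mul_apply, Matrix.diagonal_apply]
    by_cases hbs : b ∈ s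
    · by_cases hbs' : b' ∈ s
      · rw [Finset.sum_eq_single ((f ⟨b, hbs⟩ : A))]
        · rw [Matrix.conjTranspose_apply, hRapp _ b, hRapp _ b', dif_pos hbs, dif_pos hbs',
            if_pos rfl]
          by_cases hbb : b = b'
          · subst hbb
            simp [(hmems b).mp hbs]
          · have hne : (f ⟨b', hbs'⟩ : A) ≠ (f ⟨b, hbs⟩ : A) := by
              intro hcon
              apply hbb
              have := f.injective (Subtype.ext hcon)
              exact (congrArg Subtype.val this).symm
            simp [hne, hbb]
        · intro c _ hc
          rw [Matrix.conjTranspose_apply, hRapp c b, dif_pos hbs, if_neg (Ne.symm hc)]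
          simp
        · intro h; exact absurd (Finset.mem_univ _) h
      · rw [Finset.sum_eq_zero, eq_comm, ite_eq_right_iff]
        · intro hbb
          exact absurd (hbb ▸ hbs) hbs'
        · intro c _
          rw [hRs c b' hbs', mul_zero]
    · rw [Finset.sum_eq_zero, eq_comm, ite_eq_right_iff]
      · intro hbb
        rw [hds b, if_neg hbs]
      · intro c _
        rw [Matrix.conjTranspose_apply, hRs c b hbs, star_zero, zero_mul]
  · -- R * diagonal d = R
    ext a b
    rw [Matrix.mul_diagonal]
    by_cases hbs : b ∈ s
    · rw [hds b, if_pos hbs, mul_one]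
    · rw [hRs a b hbs, zero_mul]
  · -- diagonal e * R = R
    ext a b
    rw [Matrix.diagonal_mul]
    by_cases hat : a ∈ t
    · rw [hes a, if_pos hat, one_mul]
    · rw [hRmem a b hat, mul_zero]

lemma exists_conj_unitary {m : ℕ} (P Q : Fin m → Matrix A A ℂ)
    (hP : ∀ i, IsProjection (P i)) (hPo : ∀ i j, i ≠ j → P i * P j = 0) (hP1 : ∑ i, P i = 1)
    (hQ : ∀ i, IsProjection (Q i)) (hQo : ∀ i j, i ≠ j → Q i * Q j = 0) (hQ1 : ∑ i, Q i = 1)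
    (htr : ∀ i, (P i).trace = (Q i).trace) :
    ∃ U : Matrix A A ℂ, IsUnitaryMat U ∧ ∀ i, Q i = U * P i * Uᴴ := by
  classical
  choose V dP hV1 hV2 hPspec hdP using fun i => proj_spectral (hP i)
  choose W dQ hW1 hW2 hQspec hdQ using fun i => proj_spectral (hQ i)
  have htrd : ∀ i, ∑ a, dP i a = ∑ a, dQ i a := by
    intro i
    have h1 : (P i).trace = ∑ a, dP i a := by
      rw [hPspec i, Matrix.trace_mul_cycle, hV2 i, Matrix.one_mul, Matrix.trace_diagonal]
    have h2 : (Q i).trace = ∑ a, dQ i a := by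
      rw [hQspec i, Matrix.trace_mul_cycle, hW2 i, Matrix.one_mul, Matrix.trace_diagonal]
    rw [← h1, ← h2, htr i]
  choose R hR1 hR2 hR3 hR4 using fun i => exists_partial_isometry (hdP i) (hdQ i) (htrd i)
  set B : Fin m → Matrix A A ℂ := fun i => W i * R i * (V i)ᴴ with hB
  -- block identities
  have hBP : ∀ i, B i * P i = B i := by
    intro i
    rw [hB, hPspec i]
    calc W i * R i * (V i)ᴴ * (V i * Matrix.diagonal (dP i) * (V i)ᴴ)
        = W i * (R i * ((V i)ᴴ * V i) * Matrix.diagonal (dP i)) * (V i)ᴴ := by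
          simp only [Matrix.mul_assoc]
      _ = W i * R i * (V i)ᴴ := by rw [hV2 i, Matrix.mul_one, hR3 i]
  have hQB : ∀ i, Q i * B i = B i := by
    intro i
    rw [hB, hQspec i]
    calc W i * Matrix.diagonal (dQ i) * (W i)ᴴ * (W i * R i * (V i)ᴴ)
        = W i * (Matrix.diagonal (dQ i) * ((W i)ᴴ * W i) * R i) * (V i)ᴴ := by
          simp only [Matrix.mul_assoc]
      _ = W i * R i * (V i)ᴴ := by rw [hW2 i, Matrix.mul_one, hR4 i, Matrix.mul_assoc]
  have hBBt : ∀ i, B i * (B i)ᴴ = Q i := by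
    intro i
    rw [hB, hQspec i]
    simp only [Matrix.conjTranspose_mul, Matrix.conjTranspose_conjTranspose]
    calc W i * R i * (V i)ᴴ * (V i * ((R i)ᴴ * (W i)ᴴ))
        = W i * (R i * ((V i)ᴴ * V i) * (R i)ᴴ) * (W i)ᴴ := by
          simp only [Matrix.mul_assoc]
      _ = W i * Matrix.diagonal (dQ i) * (W i)ᴴ := by
          rw [hV2 i, Matrix.mul_one, hR1 i]
  have hBtB : ∀ i, (B i)ᴴ * B i = P i := by
    intro i
    rw [hB, hPspec i]
    simp only [Matrix.conjTranspose_mul, Matrix.conjTranspose_conjTranspose]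
    calc V i * ((R i)ᴴ * (W i)ᴴ) * (W i * R i * (V i)ᴴ)
        = V i * ((R i)ᴴ * ((W i)ᴴ * W i) * R i) * (V i)ᴴ := by
          simp only [Matrix.mul_assoc]
      _ = V i * Matrix.diagonal (dP i) * (V i)ᴴ := by
          rw [hW2 i, Matrix.mul_one, hR2 i]
  have hPh : ∀ i, (P i)ᴴ = P i := fun i => (hP i).1
  have hQh : ∀ i, (Q i)ᴴ = Q i := fun i => (hQ i).1
  have conj_helper : ∀ (Pm Bm : Matrix A A ℂ), Pmᴴ = Pm → Bm * Pm = Bm → Pm * Bmᴴ = Bmᴴ := by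
    intro Pm Bm hh hbp
    calc Pm * Bmᴴ = (Bm * Pmᴴ)ᴴ := by
          rw [Matrix.conjTranspose_mul, Matrix.conjTranspose_conjTranspose]
      _ = Bmᴴ := by rw [hh, hbp]
  have conj_helper' : ∀ (Qm Bm : Matrix A A ℂ), Qmᴴ = Qm → Qm * Bm = Bm → Bmᴴ * Qm = Bmᴴ := by
    intro Qm Bm hh hqb
    calc Bmᴴ * Qm = (Qmᴴ * Bm)ᴴ := by
          rw [Matrix.conjTranspose_mul, Matrix.conjTranspose_conjTranspose]
      _ = Bmᴴ := by rw [hh, hqb]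
  have hPBt : ∀ i, P i * (B i)ᴴ = (B i)ᴴ := fun i => conj_helper _ _ (hPh i) (hBP i)
  have hBtQ : ∀ i, (B i)ᴴ * Q i = (B i)ᴴ := fun i => conj_helper' _ _ (hQh i) (hQB i)
  set U : Matrix A A ℂ := ∑ i, B i with hU
  have hUt : Uᴴ = ∑ i, (B i)ᴴ := by rw [hU, Matrix.conjTranspose_sum]
  have hcross : ∀ i j, i ≠ j → B i * (B j)ᴴ = 0 := by
    intro i j hij
    calc B i * (B j)ᴴ = (B i * P i) * (P j * (B j)ᴴ) := by rw [hBP i, hPBt j]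
      _ = B i * (P i * P j) * (B j)ᴴ := by simp only [Matrix.mul_assoc]
      _ = 0 := by rw [hPo i j hij, Matrix.mul_zero, Matrix.zero_mul]
  have hcross' : ∀ i j, i ≠ j → (B i)ᴴ * B j = 0 := by
    intro i j hij
    calc (B i)ᴴ * B j = ((B i)ᴴ * Q i) * (Q j * B j) := by rw [hBtQ i, hQB j]
      _ = (B i)ᴴ * (Q i * Q j) * B j := by simp only [Matrix.mul_assoc]
      _ = 0 := by rw [hQo i j hij, Matrix.mul_zero, Matrix.zero_mul]
  have hUU : U * Uᴴ = 1 := by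
    rw [hU, hUt, Finset.sum_mul]
    have : ∀ i ∈ Finset.univ, B i * (∑ j, (B j)ᴴ) = Q i := by
      intro i _
      rw [Finset.mul_sum, Finset.sum_eq_single i]
      · exact hBBt i
      · intro j _ hji; exact hcross i j (Ne.symm hji)
      · intro h; exact absurd (Finset.mem_univ i) h
    rw [Finset.sum_congr rfl this, hQ1]
  have hUtU : Uᴴ * U = 1 := by
    rw [hU, hUt, Finset.sum_mul]
    have : ∀ i ∈ Finset.univ, (B i)ᴴ * (∑ j, B j) = P i := by
      intro i _
      rw [Finset.mul_sum, Finset.sum_eq_single i]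
      · exact hBtB i
      · intro j _ hji; exact hcross' i j (Ne.symm hji)
      · intro h; exact absurd (Finset.mem_univ i) h
    rw [Finset.sum_congr rfl this, hP1]
  refine ⟨U, ⟨hUU, hUtU⟩, ?_⟩
  intro k
  have hBPk : ∀ i, i ≠ k → B i * P k = 0 := by
    intro i hik
    calc B i * P k = B i * (P i * P k) := by rw [← Matrix.mul_assoc, hBP i]
      _ = 0 := by rw [hPo i k hik, Matrix.mul_zero]
  have hPkBt : ∀ j, j ≠ k → P k * (B j)ᴴ = 0 := by
    intro j hjk
    calc P k * (B j)ᴴ = (P k * P j) * (B j)ᴴ := by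
          rw [Matrix.mul_assoc, hPBt j]
      _ = 0 := by rw [hPo k j (Ne.symm hjk), Matrix.zero_mul]
  rw [hU, hUt, Finset.sum_mul, Finset.sum_mul]
  have step1 : ∀ i ∈ Finset.univ, B i * P k * (∑ j, (B j)ᴴ)
      = if i = k then Q k else 0 := by
    intro i _
    by_cases hik : i = k
    · subst hik
      rw [if_pos rfl, hBP i, Finset.mul_sum, Finset.sum_eq_single i]
      · exact hBBt i
      · intro j _ hji
        exact hcross i j (Ne.symm hji)
      · intro h; exact absurd (Finset.mem_univ i) h
    · rw [if_neg hik, hBPk i hik, Matrix.zero_mul]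
  rw [Finset.sum_congr rfl step1, Finset.sum_ite_eq', if_pos (Finset.mem_univ k)]

end Helpers

set_option maxHeartbeats 1000000 in
/-- if a unital quantum channel `N` on `A` and a partition of unity
`{Π i}` satisfy `N†(N(Π i)) = Π i` for all `i`, then `N = Ad_U ∘ M` for some unitary `U`
and some unital quantum channel `M` fixing every `Π i`. -/
theorem stmt_18 {A : Type} [Fintype A] [DecidableEq A]
    (N : Matrix A A ℂ →ₗ[ℂ] Matrix A A ℂ) (hN : IsCPTP N) (hNu : N 1 = 1)
    (Nd : Matrix A A ℂ →ₗ[ℂ] Matrix A A ℂ)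
    (hadj : ∀ X Y : Matrix A A ℂ, ((Nd X)ᴴ * Y).trace = (Xᴴ * N Y).trace)
    {m : ℕ} (Pr : Fin m → Matrix A A ℂ)
    (hproj : ∀ i, IsProjection (Pr i)) (horth : ∀ i j, i ≠ j → Pr i * Pr j = 0)
    (hone : ∑ i, Pr i = 1)
    (hfix : ∀ i, Nd (N (Pr i)) = Pr i) :
    ∃ (U : Matrix A A ℂ) (M : Matrix A A ℂ →ₗ[ℂ] Matrix A A ℂ),
      IsUnitaryMat U ∧ IsCPTP M ∧ M 1 = 1 ∧
      (∀ X, N X = U * M X * Uᴴ) ∧ (∀ i, M (Pr i) = Pr i) := by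
    classical
  obtain ⟨k, K, hKr, hKtp⟩ := hN
  have hKK : ∑ j, K j * (K j)ᴴ = 1 := by
    have := hKr 1
    rw [hNu] at this
    simp only [Matrix.mul_one] at this
    exact this.symm
  -- N preserves conjTranspose
  have hNct : ∀ X, (N X)ᴴ = N Xᴴ := by
    intro X
    rw [hKr X, hKr Xᴴ, Matrix.conjTranspose_sum]
    congr 1
    ext j : 1
    simp only [Matrix.conjTranspose_mul, Matrix.conjTranspose_conjTranspose, Matrix.mul_assoc]
  -- N is trace-preserving
  have hNtr : ∀ X, (N X).trace = X.trace := by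
    intro X
    rw [hKr X, Matrix.trace_sum]
    have : ∀ j ∈ Finset.univ, (K j * X * (K j)ᴴ).trace = ((K j)ᴴ * K j * X).trace := by
      intro j _
      rw [Matrix.trace_mul_cycle]
    rw [Finset.sum_congr rfl this]
    have : ∑ j, ((K j)ᴴ * K j * X).trace = ((∑ j, (K j)ᴴ * K j) * X).trace := by
      rw [Finset.sum_mul, Matrix.trace_sum]
    rw [this, hKtp, Matrix.one_mul]
  -- N preserves PSD
  have hNpsd : ∀ X : Matrix A A ℂ, X.PosSemidef → (N X).PosSemidef := by
    intro X hX
    rw [hKr X]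
    apply Finset.sum_induction _ _ (fun a b ha hb => ha.add hb) Matrix.PosSemidef.zero
    intro j _
    exact hX.mul_mul_conjTranspose_same (K j)
  set Qm : Fin m → Matrix A A ℂ := fun i => N (Pr i) with hQm
  have hPh : ∀ i, (Pr i)ᴴ = Pr i := fun i => (hproj i).1
  have hPidem : ∀ i, Pr i * Pr i = Pr i := fun i => (hproj i).2
  have hQh : ∀ i, (Qm i)ᴴ = Qm i := by
    intro i
    rw [hQm]
    simp only
    rw [hNct, hPh i]
  have hQtr : ∀ i, (Qm i).trace = (Pr i).trace := fun i => hNtr (Pr i)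
  have hQ1 : ∑ i, Qm i = 1 := by
    rw [hQm]
    simp only
    rw [← map_sum, hone, hNu]
  -- trace of Qm i * Qm i equals trace of Pr i
  have hQQtr : ∀ i, (Qm i * Qm i).trace = (Pr i).trace := by
    intro i
    have h := hadj (N (Pr i)) (Pr i)
    rw [hfix i, hPh i, hPidem i] at h
    rw [hNct, hPh i] at h
    -- h : (Pr i).trace = (N (Pr i) * N (Pr i)).trace
    exact h.symm
  -- Kadison-Schwarz: Qm i is idempotent
  have hQidem : ∀ i, Qm i * Qm i = Qm i := by
    intro i
    set P := Pr i with hPdef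
    set NP := N P with hNPdef
    have hexp : ∑ j, (K j * P - NP * K j) * (K j * P - NP * K j)ᴴ = NP - NP * NP := by
      have hterm : ∀ j, (K j * P - NP * K j) * (K j * P - NP * K j)ᴴ
          = K j * P * (K j)ᴴ - K j * P * (K j)ᴴ * NP - NP * (K j * P * (K j)ᴴ)
            + NP * (K j * (K j)ᴴ) * NP := by
        intro j
        have hNPh : NPᴴ = NP := by rw [hNPdef, hNct, hPh i]
        rw [Matrix.conjTranspose_sub, Matrix.conjTranspose_mul, Matrix.conjTranspose_mul,
          hPh i, hNPh, Matrix.sub_mul, Matrix.mul_sub, Matrix.mul_sub]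
        have e1 : K j * P * (P * (K j)ᴴ) = K j * P * (K j)ᴴ := by
          rw [← Matrix.mul_assoc, Matrix.mul_assoc (K j) P P, hPidem i]
        have e2 : K j * P * ((K j)ᴴ * NP) = K j * P * (K j)ᴴ * NP := by
          simp only [Matrix.mul_assoc]
        have e3 : NP * K j * (P * (K j)ᴴ) = NP * (K j * P * (K j)ᴴ) := by
          simp only [Matrix.mul_assoc]
        have e4 : NP * K j * ((K j)ᴴ * NP) = NP * (K j * (K j)ᴴ) * NP := by
          simp only [Matrix.mul_assoc]
        rw [e1, e2, e3, e4]
        abel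
      rw [Finset.sum_congr rfl (fun j _ => hterm j)]
      rw [Finset.sum_add_distrib, Finset.sum_sub_distrib, Finset.sum_sub_distrib]
      rw [← hKr P, ← Finset.sum_mul, ← hKr P, ← Finset.mul_sum, ← hKr P]
      have : ∑ j, NP * (K j * (K j)ᴴ) * NP = NP * (∑ j, K j * (K j)ᴴ) * NP := by
        rw [Finset.mul_sum, Finset.sum_mul]
      rw [this, hKK, Matrix.mul_one]
      abel
    have hpsd : (NP - NP * NP).PosSemidef := by
      rw [← hexp]
      apply Finset.sum_induction _ _ (fun a b ha hb => ha.add hb) Matrix.PosSemidef.zero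
      intro j _
      exact Matrix.posSemidef_self_mul_conjTranspose _
    have htr0 : (NP - NP * NP).trace = 0 := by
      rw [Matrix.trace_sub]
      have h1 : NP.trace = (Pr i).trace := hNtr P
      have h2 : (NP * NP).trace = (Pr i).trace := hQQtr i
      rw [h1, h2, sub_self]
    have := psd_trace_zero hpsd htr0
    have : NP * NP = NP := by
      have h' := sub_eq_zero.mp this
      exact h'.symm
    exact this
  -- Qm are projections
  have hQproj : ∀ i, IsProjection (Qm i) := fun i => ⟨hQh i, hQidem i⟩
  have hPrpsd : ∀ i, (Pr i).PosSemidef := by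
    intro i
    apply Matrix.posSemidef_iff_eq_transpose_mul_self.mpr
    exact ⟨Pr i, by rw [hPh i]; exact (hPidem i).symm⟩
  have hQpsd_conj : ∀ i j, (Qm i * Qm j * Qm i).PosSemidef := by
    intro i j
    have hQjpsd : (Qm j).PosSemidef := hNpsd _ (hPrpsd j)
    have := hQjpsd.mul_mul_conjTranspose_same (Qm i)
    rwa [hQh i] at this
  have horthQ : ∀ i j, i ≠ j → Qm i * Qm j = 0 := by
    intro i j hij
    suffices hS : Qm j * Qm i * Qm j = 0 by
      have hz : (Qm i * Qm j)ᴴ * (Qm i * Qm j) = 0 := by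
        rw [Matrix.conjTranspose_mul, hQh i, hQh j]
        calc Qm j * Qm i * (Qm i * Qm j)
            = Qm j * (Qm i * Qm i) * Qm j := by simp only [Matrix.mul_assoc]
          _ = Qm j * Qm i * Qm j := by rw [hQidem i]
          _ = 0 := hS
      exact Matrix.conjTranspose_mul_self_eq_zero.mp hz
    have hsumtr : ∑ l, (Qm j * Qm l * Qm j).trace = (Pr j).trace := by
      have hsum : ∑ l, Qm j * Qm l * Qm j = Qm j := by
        rw [← Finset.sum_mul, ← Finset.mul_sum, hQ1, Matrix.mul_one, hQidem j]
      rw [← Matrix.trace_sum, hsum, hQtr j]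
    have hj_term : (Qm j * Qm j * Qm j).trace = (Pr j).trace := by
      rw [hQidem j, hQidem j, hQtr j]
    have h' := Finset.add_sum_erase Finset.univ
      (fun l => (Qm j * Qm l * Qm j).trace) (Finset.mem_univ j)
    have hrest : ∑ l ∈ Finset.univ.erase j, (Qm j * Qm l * Qm j).trace = 0 := by
      linear_combination hsumtr + h' - hj_term
    have hzero : (Qm j * Qm i * Qm j).trace = 0 := by
      have hnn : ∀ l ∈ Finset.univ.erase j, 0 ≤ (Qm j * Qm l * Qm j).trace :=
        fun l _ => psd_trace_nonneg (hQpsd_conj j l)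
      exact (Finset.sum_eq_zero_iff_of_nonneg hnn).mp hrest i
        (Finset.mem_erase.mpr ⟨hij, Finset.mem_univ i⟩)
    exact psd_trace_zero (hQpsd_conj j i) hzero
  obtain ⟨U, hUuni, hConj⟩ := exists_conj_unitary Pr Qm hproj horth hone
    hQproj horthQ hQ1 (fun i => (hQtr i).symm)
  have hUU : U * Uᴴ = 1 := hUuni.1
  have hUtU : Uᴴ * U = 1 := hUuni.2
  set M : Matrix A A ℂ →ₗ[ℂ] Matrix A A ℂ :=
    { toFun := fun X => Uᴴ * N X * U,
      map_add' := by
        intro x y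
        simp only [map_add, Matrix.mul_add, Matrix.add_mul]
      map_smul' := by
        intro c x
        simp only [_root_.map_smul, RingHom.id_apply, Matrix.mul_smul, Matrix.smul_mul] } with hM
  have hMapp : ∀ X, M X = Uᴴ * N X * U := fun X => rfl
  refine ⟨U, M, hUuni, ?_, ?_, ?_, ?_⟩
  · refine ⟨k, fun j => Uᴴ * K j, ?_, ?_⟩
    · intro X
      rw [hMapp, hKr X, Finset.mul_sum, Finset.sum_mul]
      congr 1
      ext j : 1
      simp only [Matrix.conjTranspose_mul, Matrix.conjTranspose_conjTranspose, Matrix.mul_assoc]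
    · have : ∀ j ∈ Finset.univ, (Uᴴ * K j)ᴴ * (Uᴴ * K j) = (K j)ᴴ * K j := by
        intro j _
        calc (Uᴴ * K j)ᴴ * (Uᴴ * K j) = (K j)ᴴ * (U * Uᴴ) * K j := by
              simp only [Matrix.conjTranspose_mul, Matrix.conjTranspose_conjTranspose,
                Matrix.mul_assoc]
          _ = (K j)ᴴ * K j := by rw [hUU, Matrix.mul_one]
      rw [Finset.sum_congr rfl this, hKtp]
  · rw [hMapp, hNu, Matrix.mul_one, hUtU]
  · intro X
    rw [hMapp]
    calc N X = (U * Uᴴ) * N X * (U * Uᴴ) := by rw [hUU, Matrix.one_mul, Matrix.mul_one]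
      _ = U * (Uᴴ * N X * U) * Uᴴ := by simp only [Matrix.mul_assoc]
  · intro i
    rw [hMapp]
    have hNPr : N (Pr i) = U * Pr i * Uᴴ := hConj i
    rw [hNPr]
    calc Uᴴ * (U * Pr i * Uᴴ) * U = (Uᴴ * U) * Pr i * (Uᴴ * U) := by
          simp only [Matrix.mul_assoc]
      _ = Pr i := by rw [hUtU, Matrix.one_mul, Matrix.mul_one]
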